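/- arXiv:math/0510272 — 6 statements merged into one kernel-verified Lean document; each statement's English description precedes it below -/
import Mathlib

section
/- Let V be a finitely complete and finitely cocomplete monoidal biclosed category whose unit object I is projective (with respect to regular epimorphisms). Let Q be an object such that the functor {-, Q} : V^op → V (the right adjoint of X ⊗ -) is conservative and preserves regular epimorphisms. Then for a morphism f : X → Y, if f ⊗ {X, Q} : X ⊗ {X, Q} → Y ⊗ {X, Q} is a regular monomorphism, then {f, Q} : {Y, Q} → {X, Q} is a split epimorphism. -/
open CategoryTheory CategoryTheory.Limits CategoryTheory.MonoidalCategory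
  CategoryTheory.MonoidalClosed Opposite

/-- A regular monomorphism becomes a regular epimorphism in the opposite category. -/
noncomputable def regularEpiOpOfRegularMono {V : Type*} [Category V] {A B : V} (m : A ⟶ B)
    (h : RegularMono m) : RegularEpi m.op where
  W := op h.Z
  left := h.left.op
  right := h.right.op
  w := by rw [← op_comp, ← op_comp, h.w]
  isColimit := Cofork.IsColimit.mk' _ (fun s => by
    have cond : s.π.unop ≫ h.left = s.π.unop ≫ h.right := by
      apply Quiver.Hom.op_inj
      simpa using s.condition
    obtain ⟨l, hl⟩ := Fork.IsLimit.lift' h.isLimit s.π.unop cond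
    refine ⟨l.op, ?_, ?_⟩
    · simp only [Cofork.π_ofπ, ← op_comp]
      exact congrArg Quiver.Hom.op hl
    · intro k hk
      apply Quiver.Hom.unop_inj
      apply Fork.IsLimit.hom_ext h.isLimit
      simp only [Cofork.π_ofπ] at hk
      have : k.unop ≫ m = s.π.unop := by
        apply Quiver.Hom.op_inj
        simpa using hk
      exact this.trans hl.symm)

/-- In a finitely complete and finitely cocomplete monoidal biclosed
category `V` whose unit is projective with respect to regular epimorphisms, if `Q` is an
object such that the functor `{-, Q} : Vᵒᵖ ⥤ V` is conservative and preserves regular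
epimorphisms, then for any morphism `f : X ⟶ Y` such that
`f ⊗ {X, Q} : X ⊗ {X, Q} ⟶ Y ⊗ {X, Q}` is a regular monomorphism, the morphism
`{f, Q} : {Y, Q} ⟶ {X, Q}` is a split epimorphism. -/
theorem stmt0 {V : Type*} [Category V] [MonoidalCategory V] [MonoidalClosed V]
    [HasFiniteLimits V] [HasFiniteColimits V]
    -- biclosedness: the functors `- ⊗ X` also all have right adjoints
    (hbiclosed : ∀ X : V, (tensorRight X).IsLeftAdjoint)
    -- the unit object is projective with respect to regular epimorphisms
    (hproj : ∀ {P B : V} (e : P ⟶ B), Nonempty (RegularEpi e) → ∀ g : 𝟙_ V ⟶ B, ∃ g', g' ≫ e = g)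
    (Q : V)
    -- `{-, Q} : Vᵒᵖ ⥤ V` is conservative
    (hcons : ∀ {X Y : Vᵒᵖ} (g : X ⟶ Y), IsIso ((MonoidalClosed.internalHom.flip.obj Q).map g) → IsIso g)
    -- `{-, Q} : Vᵒᵖ ⥤ V` preserves regular epimorphisms
    (hregepi : ∀ {X Y : Vᵒᵖ} (g : X ⟶ Y), Nonempty (RegularEpi g) →
      Nonempty (RegularEpi ((MonoidalClosed.internalHom.flip.obj Q).map g)))
    {X Y : V} (f : X ⟶ Y)
    (hf : Nonempty (RegularMono (f ▷ ((ihom X).obj Q)))) :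
    IsSplitEpi ((MonoidalClosed.pre f).app Q) := by
  -- Notation: R = {X, Q}, m = f ▷ R
  set R := (ihom X).obj Q with hR
  set m : X ⊗ R ⟶ Y ⊗ R := f ▷ R with hm
  -- m.op is a regular epi in Vᵒᵖ
  have hmop : Nonempty (RegularEpi m.op) := ⟨regularEpiOpOfRegularMono m hf.some⟩
  -- hence {m, Q} = (pre m).app Q is a regular epi in V
  have hpre : Nonempty (RegularEpi ((MonoidalClosed.pre m).app Q)) := by
    have := hregepi m.op hmop
    simpa [MonoidalClosed.internalHom] using this
  -- the evaluation map as a global element of {X ⊗ R, Q}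
  set ev : X ⊗ R ⟶ Q := (ihom.ev X).app Q with hev
  set g : 𝟙_ V ⟶ (ihom (X ⊗ R)).obj Q := MonoidalClosed.curry ((ρ_ (X ⊗ R)).hom ≫ ev) with hg
  -- lift it through the regular epi using projectivity of the unit
  obtain ⟨g', hg'⟩ := hproj ((MonoidalClosed.pre m).app Q) hpre g
  -- the corresponding extension h : Y ⊗ R ⟶ Q of ev along m
  set h : Y ⊗ R ⟶ Q := (ρ_ (Y ⊗ R)).inv ≫ MonoidalClosed.uncurry g' with hh
  have extend : m ≫ h = ev := by
    have e1 : MonoidalClosed.uncurry (g' ≫ (MonoidalClosed.pre m).app Q)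
        = (ρ_ (X ⊗ R)).hom ≫ ev := by
      rw [hg', hg, MonoidalClosed.uncurry_curry]
    rw [MonoidalClosed.uncurry_natural_left, MonoidalClosed.uncurry_pre] at e1
    -- e1 : (X ⊗ R) ◁ g' ≫ m ▷ 𝟙_ V ≫ ev' = ρ ≫ ev
    have e2 : m ▷ (𝟙_ V) ≫ MonoidalClosed.uncurry g' = (ρ_ (X ⊗ R)).hom ≫ ev := by
      rw [MonoidalClosed.uncurry_eq]
      rw [whisker_exchange_assoc] at e1
      exact e1
    calc m ≫ h = m ≫ (ρ_ (Y ⊗ R)).inv ≫ MonoidalClosed.uncurry g' := rfl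
      _ = (ρ_ (X ⊗ R)).inv ≫ m ▷ (𝟙_ V) ≫ MonoidalClosed.uncurry g' := by
          rw [← rightUnitor_inv_naturality_assoc]
      _ = (ρ_ (X ⊗ R)).inv ≫ (ρ_ (X ⊗ R)).hom ≫ ev := by rw [e2]
      _ = ev := by simp
  -- the section of (pre f).app Q
  refine ⟨⟨⟨MonoidalClosed.curry h, ?_⟩⟩⟩
  apply MonoidalClosed.uncurry_injective
  rw [MonoidalClosed.uncurry_natural_left, MonoidalClosed.uncurry_pre]
  rw [whisker_exchange_assoc]
  rw [← MonoidalClosed.uncurry_eq, MonoidalClosed.uncurry_curry]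
  rw [MonoidalClosed.uncurry_id_eq_ev]
  exact extend
end

section
/- Let V be a finitely complete and finitely cocomplete monoidal biclosed category whose unit object I is projective. Let Q be an object such that {-, Q} : V^op → V is conservative and preserves regular epimorphisms. If for a morphism f : X → Y the morphism {f, Q} : {Y, Q} → {X, Q} is a split epimorphism, then f is right pure, i.e., f ⊗ Z : X ⊗ Z → Y ⊗ Z is a regular monomorphism for every object Z. -/
open CategoryTheory CategoryTheory.Limits CategoryTheory.MonoidalCategory
  CategoryTheory.MonoidalClosed Opposite

section Aux

/-- The opposite of a regular mono is a regular epi. -/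
def regularMonoOpRegularEpi {C : Type*} [Category C] {X Y : C} (e : X ⟶ Y)
    (h : RegularMono e) : RegularEpi e.op where
  W := Opposite.op h.Z
  left := h.left.op
  right := h.right.op
  w := by rw [← op_comp, ← op_comp, h.w]
  isColimit := by
    refine Cofork.IsColimit.mk _
      (fun s => (h.isLimit.lift (Fork.ofι s.π.unop (by
        apply Quiver.Hom.op_inj
        simp only [op_comp, Quiver.Hom.op_unop]
        exact s.condition))).op) (fun s => ?_) (fun s m hm => ?_)
    · apply Quiver.Hom.unop_inj
      simp
      exact Fork.IsLimit.lift_ι h.isLimit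
    · apply Quiver.Hom.unop_inj
      refine Fork.IsLimit.hom_ext h.isLimit ?_
      have h1 : m.unop ≫ e = s.π.unop := by
        apply Quiver.Hom.op_inj
        simpa using hm
      have h2 := Fork.IsLimit.lift_ι (t := Fork.ofι s.π.unop (by
        apply Quiver.Hom.op_inj
        simp only [op_comp, Quiver.Hom.op_unop]
        exact s.condition)) h.isLimit
      simpa [h1] using h2.symm

/-- A formal diagram chase: a two-sided inverse for `kq`. -/
lemma isIso_of_retract_aux {D : Type*} [Category D] {QA QB QC QE : D}
    (gq : QB ⟶ QA) (eq' : QB ⟶ QE) (kq : QE ⟶ QA) (uq vq : QC ⟶ QB)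
    (σ : QA ⟶ QB) (w : QB ⟶ QC)
    (hσ : σ ≫ gq = 𝟙 QA) (hek : eq' ≫ kq = gq) (hue : uq ≫ eq' = vq ≫ eq')
    (hw1 : w ≫ uq = gq ≫ σ) (hw2 : w ≫ vq = 𝟙 QB) (hepi : Epi eq') :
    IsIso kq := by
  have hB : gq ≫ σ ≫ eq' = eq' := by
    rw [← Category.assoc, ← hw1, Category.assoc, hue, ← Category.assoc, hw2, Category.id_comp]
  refine ⟨σ ≫ eq', ?_, ?_⟩
  · rw [← cancel_epi eq']
    rw [← Category.assoc, hek, hB, Category.comp_id]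
  · rw [Category.assoc, hek, hσ]

variable {V : Type*} [Category V] [MonoidalCategory V] [MonoidalClosed V]

lemma uncurry_comp_pre {M N P Q : V} (h : M ⟶ N) (p : P ⟶ (ihom N).obj Q) :
    MonoidalClosed.uncurry (p ≫ (MonoidalClosed.pre h).app Q) =
      (h ▷ P) ≫ MonoidalClosed.uncurry p := by
  rw [uncurry_natural_left, MonoidalClosed.uncurry_pre, whisker_exchange_assoc, ← uncurry_eq]

variable [HasFiniteLimits V] [HasFiniteColimits V]

lemma regularMono_of_isSplitEpi_pre
    (hbiclosed : ∀ X : V, (tensorRight X).IsLeftAdjoint)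
    (Q : V)
    (hcons : ∀ {X Y : Vᵒᵖ} (g : X ⟶ Y),
      IsIso ((MonoidalClosed.internalHom.flip.obj Q).map g) → IsIso g)
    (hregepi : ∀ {X Y : Vᵒᵖ} (g : X ⟶ Y), Nonempty (RegularEpi g) →
      Nonempty (RegularEpi ((MonoidalClosed.internalHom.flip.obj Q).map g)))
    {A B : V} (g : A ⟶ B) (hg : IsSplitEpi ((MonoidalClosed.pre g).app Q)) :
    Nonempty (RegularMono g) := by
  obtain ⟨σ⟩ := hg.exists_splitEpi
  have hke : equalizer.lift g pushout.condition ≫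
      equalizer.ι (pushout.inl g g) (pushout.inr g g) = g := equalizer.lift_ι _ _
  -- the functor `- ⊗ [B,Q]` preserves the pushout
  haveI := hbiclosed ((ihom B).obj Q)
  have hPO := isColimitPushoutCoconeMapOfIsColimit (tensorRight ((ihom B).obj Q))
    pushout.condition (pushoutIsPushout g g)
  have hcoeq : (tensorRight ((ihom B).obj Q)).map g ≫
      MonoidalClosed.uncurry ((MonoidalClosed.pre g).app Q ≫ σ.section_) =
      (tensorRight ((ihom B).obj Q)).map g ≫
      MonoidalClosed.uncurry (𝟙 ((ihom B).obj Q)) := by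
    simp only [Functor.flip_obj_map, curriedTensor_map_app]
    rw [← uncurry_comp_pre, ← uncurry_comp_pre, Category.assoc, σ.id, Category.comp_id,
      Category.id_comp]
  have hw1 := PushoutCocone.IsColimit.inl_desc hPO _ _ hcoeq
  have hw2 := PushoutCocone.IsColimit.inr_desc hPO _ _ hcoeq
  simp only [Functor.flip_obj_map, curriedTensor_map_app] at hw1 hw2
  -- the two key equations for `w := curry (desc)`
  have h1 : MonoidalClosed.curry
        (PushoutCocone.IsColimit.desc hPO (MonoidalClosed.uncurry
          ((MonoidalClosed.pre g).app Q ≫ σ.section_))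
          (MonoidalClosed.uncurry (𝟙 ((ihom B).obj Q))) hcoeq) ≫
      (MonoidalClosed.pre (pushout.inl g g)).app Q =
      (MonoidalClosed.pre g).app Q ≫ σ.section_ := by
    apply uncurry_injective
    erw [uncurry_comp_pre, uncurry_curry]
    exact hw1
  have h2 : MonoidalClosed.curry
        (PushoutCocone.IsColimit.desc hPO (MonoidalClosed.uncurry
          ((MonoidalClosed.pre g).app Q ≫ σ.section_))
          (MonoidalClosed.uncurry (𝟙 ((ihom B).obj Q))) hcoeq) ≫
      (MonoidalClosed.pre (pushout.inr g g)).app Q = 𝟙 ((ihom B).obj Q) := by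
    apply uncurry_injective
    erw [uncurry_comp_pre, uncurry_curry]
    exact hw2
  -- `[e,Q] ≫ [k,Q] = [g,Q]`
  have hek : (MonoidalClosed.pre (equalizer.ι (pushout.inl g g) (pushout.inr g g))).app Q ≫
      (MonoidalClosed.pre (equalizer.lift g pushout.condition)).app Q =
      (MonoidalClosed.pre g).app Q := by
    rw [← NatTrans.comp_app, ← MonoidalClosed.pre_map, hke]
  -- `[u,Q] ≫ [e,Q] = [v,Q] ≫ [e,Q]`
  have hue : (MonoidalClosed.pre (pushout.inl g g)).app Q ≫
      (MonoidalClosed.pre (equalizer.ι (pushout.inl g g) (pushout.inr g g))).app Q =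
      (MonoidalClosed.pre (pushout.inr g g)).app Q ≫
      (MonoidalClosed.pre (equalizer.ι (pushout.inl g g) (pushout.inr g g))).app Q := by
    rw [← NatTrans.comp_app, ← MonoidalClosed.pre_map, ← NatTrans.comp_app,
      ← MonoidalClosed.pre_map, equalizer.condition]
  -- `[e,Q]` is an epimorphism
  have hepi : Epi ((MonoidalClosed.pre
      (equalizer.ι (pushout.inl g g) (pushout.inr g g))).app Q) := by
    obtain ⟨re⟩ := hregepi (equalizer.ι (pushout.inl g g) (pushout.inr g g)).op
      ⟨regularMonoOpRegularEpi _ (RegularMono.equalizer _ _)⟩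
    haveI := re
    have : Epi ((MonoidalClosed.internalHom.flip.obj Q).map
      (equalizer.ι (pushout.inl g g) (pushout.inr g g)).op) := RegularEpi.epi _ re
    exact this
  -- hence `[k,Q]` is an isomorphism, so `k` is an isomorphism
  have hiso : IsIso ((MonoidalClosed.pre (equalizer.lift g pushout.condition)).app Q) :=
    isIso_of_retract_aux ((MonoidalClosed.pre g).app Q) _ _ _ _ σ.section_ _
      σ.id hek hue h1 h2 hepi
  have : IsIso ((MonoidalClosed.internalHom.flip.obj Q).map
      (equalizer.lift g pushout.condition).op) := hiso
  haveI : IsIso (equalizer.lift g pushout.condition).op := hcons _ this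
  haveI : IsIso (equalizer.lift g pushout.condition) := isIso_of_op _
  -- conclude: `g` is a regular mono
  haveI : Mono g := by rw [← hke]; infer_instance
  have hinv : inv (equalizer.lift g pushout.condition) ≫ g =
      equalizer.ι (pushout.inl g g) (pushout.inr g g) := by
    rw [← cancel_epi (equalizer.lift g pushout.condition), IsIso.hom_inv_id_assoc, hke]
  refine ⟨⟨pushout g g, pushout.inl g g, pushout.inr g g, pushout.condition, ?_⟩⟩
  refine Fork.IsLimit.mk _
    (fun s => equalizer.lift s.ι s.condition ≫ inv (equalizer.lift g pushout.condition))
    (fun s => ?_) (fun s m hm => ?_)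
  · simp only [Fork.ι_ofι, Category.assoc, hinv, equalizer.lift_ι]
  · rw [← cancel_mono g]
    simp only [Fork.ι_ofι] at hm
    simp only [Category.assoc, hinv, equalizer.lift_ι, hm]

end Aux

/-- In a finitely complete and finitely cocomplete monoidal biclosed
category `V` whose unit is projective with respect to regular epimorphisms, if `Q` is an
object such that `{-, Q} : Vᵒᵖ ⥤ V` is conservative and preserves regular epimorphisms,
and `f : X ⟶ Y` is a morphism such that `{f, Q} : {Y, Q} ⟶ {X, Q}` is a split
epimorphism, then `f` is right pure: `f ⊗ Z` is a regular monomorphism for all `Z`. -/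
theorem stmt1 {V : Type*} [Category V] [MonoidalCategory V] [MonoidalClosed V]
    [HasFiniteLimits V] [HasFiniteColimits V]
    (hbiclosed : ∀ X : V, (tensorRight X).IsLeftAdjoint)
    (hproj : ∀ {P B : V} (e : P ⟶ B), Nonempty (RegularEpi e) → ∀ g : 𝟙_ V ⟶ B, ∃ g', g' ≫ e = g)
    (Q : V)
    (hcons : ∀ {X Y : Vᵒᵖ} (g : X ⟶ Y),
      IsIso ((MonoidalClosed.internalHom.flip.obj Q).map g) → IsIso g)
    (hregepi : ∀ {X Y : Vᵒᵖ} (g : X ⟶ Y), Nonempty (RegularEpi g) →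
      Nonempty (RegularEpi ((MonoidalClosed.internalHom.flip.obj Q).map g)))
    {X Y : V} (f : X ⟶ Y)
    (hf : IsSplitEpi ((MonoidalClosed.pre f).app Q)) :
    ∀ Z : V, Nonempty (RegularMono (f ▷ Z)) := by
  intro Z
  obtain ⟨σ⟩ := hf.exists_splitEpi
  -- transfer the split-epi property from `[f,Q]` to `[f ▷ Z, Q]`
  have hsec : MonoidalClosed.curry ((α_ Y Z ((ihom (MonoidalCategory.tensorObj X Z)).obj Q)).hom ≫
        MonoidalClosed.uncurry
          (MonoidalClosed.curry ((α_ X Z ((ihom (MonoidalCategory.tensorObj X Z)).obj Q)).inv ≫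
            (ihom.ev (MonoidalCategory.tensorObj X Z)).app Q) ≫ σ.section_)) ≫
      (MonoidalClosed.pre (f ▷ Z)).app Q = 𝟙 ((ihom (MonoidalCategory.tensorObj X Z)).obj Q) := by
    apply uncurry_injective
    rw [uncurry_comp_pre, uncurry_curry, uncurry_id_eq_ev, uncurry_natural_left,
      associator_naturality_left_assoc, ← whisker_exchange_assoc, ← uncurry_comp_pre, σ.id,
      uncurry_id_eq_ev]
    have hc := MonoidalClosed.uncurry_eq (MonoidalClosed.curry
      ((α_ X Z ((ihom (MonoidalCategory.tensorObj X Z)).obj Q)).inv ≫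
        (ihom.ev (MonoidalCategory.tensorObj X Z)).app Q))
    simp only [Functor.id_obj] at hc
    rw [← hc, uncurry_curry, Iso.hom_inv_id_assoc]
  exact regularMono_of_isSplitEpi_pre hbiclosed Q hcons hregepi (f ▷ Z) ⟨⟨⟨_, hsec⟩⟩⟩
end

section
/- In a finitely complete and finitely cocomplete monoidal biclosed category V with projective unit, if Q is an object for which {-, Q} : V^op → V is conservative and preserves regular epimorphisms, then a morphism f : X → Y is right pure if and only if {f, Q} : {Y, Q} → {X, Q} is a split epimorphism. -/
open CategoryTheory CategoryTheory.Limits CategoryTheory.MonoidalCategory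
  CategoryTheory.MonoidalClosed Opposite

section Aux

variable {V : Type*} [Category V]

/-- The opposite of a regular mono is a regular epi. -/
noncomputable def regularEpiOpAux {A B : V} (f : A ⟶ B) (h : RegularMono f) :
    RegularEpi f.op where
  W := op h.Z
  left := h.left.op
  right := h.right.op
  w := by rw [← op_comp, ← op_comp, h.w]
  isColimit := by
    haveI : RegularMono f := h
    have hcond : ∀ s : Cofork h.left.op h.right.op,
        s.π.unop ≫ h.left = s.π.unop ≫ h.right := by
      intro s
      have h2 := congrArg Quiver.Hom.unop s.condition
      simpa using h2
    refine Cofork.IsColimit.mk _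
      (fun s => (Fork.IsLimit.lift' h.isLimit s.π.unop (hcond s)).1.op)
      (fun s => ?_) (fun s m hm => ?_)
    · have h3 := (Fork.IsLimit.lift' h.isLimit s.π.unop (hcond s)).2
      simp only [Fork.ι_ofι] at h3
      rw [Cofork.π_ofπ, ← op_comp, h3]
      rfl
    · apply Quiver.Hom.unop_inj
      have h2 := congrArg Quiver.Hom.unop hm
      have h3 := (Fork.IsLimit.lift' h.isLimit s.π.unop (hcond s)).2
      apply (@cancel_mono _ _ _ _ _ f h.mono).1
      simp only [Fork.ι_ofι] at h3
      simp only [Quiver.Hom.unop_op] at *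
      rw [h3]
      simpa using h2

variable [MonoidalCategory V] [MonoidalClosed V]

lemma curry_comp_ev {A Y B : V} (g : A ⊗ Y ⟶ B) :
    A ◁ MonoidalClosed.curry g ≫ (ihom.ev A).app B = g := by
  have h1 := uncurry_curry g
  rw [uncurry_eq] at h1
  simpa using h1

lemma curry_whiskerRight_comp {A B B' Q : V} (k : B' ⟶ B) (ψ : B ⊗ A ⟶ Q) :
    curry (k ▷ A ≫ ψ) = curry ψ ≫ (pre k).app Q := by
  apply uncurry_injective
  rw [uncurry_curry, uncurry_eq, MonoidalCategory.whiskerLeft_comp, Category.assoc,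
    id_tensor_pre_app_comp_ev, whisker_exchange_assoc, ← uncurry_eq, uncurry_curry]

lemma isRightAdjoint_internalHomFlip
    (hbiclosed : ∀ X : V, (tensorRight X).IsLeftAdjoint) (Q : V) :
    (MonoidalClosed.internalHom.flip.obj Q).IsRightAdjoint := by
  have h' : ∀ A : V, ∃ R : V ⥤ V, Nonempty (tensorRight A ⊣ R) := fun A =>
    (hbiclosed A).exists_rightAdjoint
  choose RA hadj using h'
  let adjA : ∀ A : V, tensorRight A ⊣ RA A := fun A => (hadj A).some
  let e : ∀ (A : V) (X : Vᵒᵖ),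
      ((op ((RA A).obj Q) : Vᵒᵖ) ⟶ X) ≃ (A ⟶ (MonoidalClosed.internalHom.flip.obj Q).obj X) :=
    fun A X =>
    (opEquiv _ _).trans <| (((adjA A).homEquiv X.unop Q).symm.trans
      ((ihom.adjunction X.unop).homEquiv A Q))
  have he : ∀ (A : V) (X X' : Vᵒᵖ) (g : X ⟶ X') (h : (op ((RA A).obj Q) : Vᵒᵖ) ⟶ X),
      e A X' (h ≫ g) = e A X h ≫ (MonoidalClosed.internalHom.flip.obj Q).map g := by
    intro A X X' g h
    show curry (((adjA A).homEquiv X'.unop Q).symm (h ≫ g).unop)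
      = curry (((adjA A).homEquiv X.unop Q).symm h.unop) ≫ (pre g.unop).app Q
    rw [unop_comp, Adjunction.homEquiv_naturality_left_symm]
    exact curry_whiskerRight_comp g.unop _
  exact (Adjunction.adjunctionOfEquivLeft e he).isRightAdjoint

end Aux

/-- In a finitely complete and finitely cocomplete monoidal biclosed
category `V` with projective unit, if `Q` is an object for which `{-, Q} : Vᵒᵖ ⥤ V` is
conservative and preserves regular epimorphisms, then a morphism `f : X ⟶ Y` is right
pure (i.e. `f ⊗ Z` is a regular monomorphism for every `Z`) if and only if
`{f, Q} : {Y, Q} ⟶ {X, Q}` is a split epimorphism. -/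
theorem stmt2 {V : Type*} [Category V] [MonoidalCategory V] [MonoidalClosed V]
    [HasFiniteLimits V] [HasFiniteColimits V]
    (hbiclosed : ∀ X : V, (tensorRight X).IsLeftAdjoint)
    (hproj : ∀ {P B : V} (e : P ⟶ B), Nonempty (RegularEpi e) → ∀ g : 𝟙_ V ⟶ B, ∃ g', g' ≫ e = g)
    (Q : V)
    (hcons : ∀ {X Y : Vᵒᵖ} (g : X ⟶ Y),
      IsIso ((MonoidalClosed.internalHom.flip.obj Q).map g) → IsIso g)
    (hregepi : ∀ {X Y : Vᵒᵖ} (g : X ⟶ Y), Nonempty (RegularEpi g) →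
      Nonempty (RegularEpi ((MonoidalClosed.internalHom.flip.obj Q).map g)))
    {X Y : V} (f : X ⟶ Y) :
    (∀ Z : V, Nonempty (RegularMono (f ▷ Z))) ↔ IsSplitEpi ((MonoidalClosed.pre f).app Q) := by
  constructor
  · -- right pure implies split epi
    intro hpure
    set Z := (ihom X).obj Q with hZ
    obtain ⟨rm⟩ := hpure Z
    obtain ⟨g', hg'⟩ := hproj ((MonoidalClosed.internalHom.flip.obj Q).map (f ▷ Z).op)
      (hregepi (f ▷ Z).op ⟨regularEpiOpAux _ rm⟩)
      (curry ((ρ_ (X ⊗ Z)).hom ≫ (ihom.ev X).app Q))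
    let g'' : 𝟙_ V ⟶ (ihom (Y ⊗ Z)).obj Q := g'
    have hg'' : g'' ≫ (pre (f ▷ Z)).app Q
        = curry ((ρ_ (X ⊗ Z)).hom ≫ (ihom.ev X).app Q) := hg'
    refine ⟨⟨⟨curry ((ρ_ (Y ⊗ Z)).inv ≫ ((Y ⊗ Z) ◁ g'') ≫ (ihom.ev (Y ⊗ Z)).app Q), ?_⟩⟩⟩
    rw [← curry_whiskerRight_comp]
    have key : f ▷ Z ≫ (ρ_ (Y ⊗ Z)).inv ≫ ((Y ⊗ Z) ◁ g'') ≫ (ihom.ev (Y ⊗ Z)).app Q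
        = (ihom.ev X).app Q := by
      rw [rightUnitor_inv_naturality_assoc, ← whisker_exchange_assoc,
        ← MonoidalClosed.uncurry_pre, uncurry_eq,
        ← MonoidalCategory.whiskerLeft_comp_assoc, hg'']
      simp only [Functor.id_obj]
      rw [curry_comp_ev, Iso.inv_hom_id_assoc]
    rw [key, ← uncurry_id_eq_ev, curry_uncurry]
  · -- split epi implies right pure
    intro hsplit Z
    obtain ⟨⟨s, hs⟩⟩ := hsplit
    set h : X ⊗ Z ⟶ Y ⊗ Z := f ▷ Z with hh
    -- Step A: (pre h).app Q is a split epi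
    set A := (ihom (X ⊗ Z)).obj Q with hA
    set c : Z ⊗ A ⟶ (ihom X).obj Q :=
      curry ((α_ X Z A).inv ≫ (ihom.ev (X ⊗ Z)).app Q) with hc
    set t : A ⟶ (ihom (Y ⊗ Z)).obj Q :=
      curry ((α_ Y Z A).hom ≫ (Y ◁ (c ≫ s)) ≫ (ihom.ev Y).app Q) with htdef
    have ht : t ≫ (pre h).app Q = 𝟙 A := by
      rw [htdef, ← curry_whiskerRight_comp]
      have key : h ▷ A ≫ (α_ Y Z A).hom ≫ (Y ◁ (c ≫ s)) ≫ (ihom.ev Y).app Q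
          = (ihom.ev (X ⊗ Z)).app Q := by
        rw [hh, associator_naturality_left_assoc, ← whisker_exchange_assoc,
          ← MonoidalClosed.uncurry_pre, uncurry_eq,
          ← MonoidalCategory.whiskerLeft_comp_assoc, Category.assoc, hs,
          Category.comp_id, hc]
        simp only [Functor.id_obj]
        rw [curry_comp_ev, Iso.hom_inv_id_assoc]
      rw [key, ← uncurry_id_eq_ev, curry_uncurry]
    -- Step B: conclude h is a regular mono
    set P := pushout h h with hP
    set u : Y ⊗ Z ⟶ P := pushout.inl h h with hu
    set v : Y ⊗ Z ⟶ P := pushout.inr h h with hv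
    set m : equalizer u v ⟶ Y ⊗ Z := equalizer.ι u v with hm
    set e : X ⊗ Z ⟶ equalizer u v := equalizer.lift h pushout.condition with hedef
    have he : e ≫ m = h := equalizer.lift_ι h pushout.condition
    -- the functor F preserves pullbacks
    haveI := isRightAdjoint_internalHomFlip hbiclosed Q
    haveI : PreservesLimitsOfSize.{0, 0} (MonoidalClosed.internalHom.flip.obj Q) := by
      haveI := (Adjunction.ofIsRightAdjoint
        (MonoidalClosed.internalHom.flip.obj Q)).rightAdjoint_preservesLimits
      exact preservesSmallestLimits_of_preservesLimits _
    have sq : IsPullback ((MonoidalClosed.internalHom.flip.obj Q).map v.op)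
        ((MonoidalClosed.internalHom.flip.obj Q).map u.op)
        ((MonoidalClosed.internalHom.flip.obj Q).map h.op)
        ((MonoidalClosed.internalHom.flip.obj Q).map h.op) :=
      ((IsPushout.of_hasPushout h h).op).map _
    have sq' : IsPullback ((pre v).app Q) ((pre u).app Q) ((pre h).app Q) ((pre h).app Q) := sq
    -- the split epi (pre h).app Q, with kernel pair ((pre v).app Q, (pre u).app Q)
    haveI : IsSplitEpi ((pre h).app Q) := ⟨⟨⟨t, ht⟩⟩⟩
    haveI hepi : Epi ((pre h).app Q) := inferInstance
    have hmono_m : RegularMono m := by rw [hm]; exact RegularMono.equalizer u v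
    obtain ⟨rem⟩ := hregepi m.op ⟨regularEpiOpAux _ hmono_m⟩
    have rem' : RegularEpi ((pre m).app Q) := rem
    haveI : Epi ((pre m).app Q) := @RegularEpi.epi _ _ _ _ _ rem'
    have hcomp : (pre h).app Q = (pre m).app Q ≫ (pre e).app Q := by
      rw [← he, MonoidalClosed.pre_map]; rfl
    have hum : (pre u).app Q ≫ (pre m).app Q = (pre v).app Q ≫ (pre m).app Q := by
      have h1 : MonoidalClosed.pre (m ≫ u) = MonoidalClosed.pre (m ≫ v) := by
        rw [equalizer.condition]
      have h2 := congrArg (fun (k : ihom P ⟶ ihom (equalizer u v)) => k.app Q) h1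
      simpa only [MonoidalClosed.pre_map, NatTrans.comp_app] using h2
    -- lift against the pullback
    have hw : 𝟙 _ ≫ (pre h).app Q
        = ((pre h).app Q ≫ t) ≫ (pre h).app Q := by
      rw [Category.id_comp, Category.assoc, ht, Category.comp_id]
    have hl1 := sq'.lift_fst (𝟙 _) ((pre h).app Q ≫ t) hw
    have hl2 := sq'.lift_snd (𝟙 _) ((pre h).app Q ≫ t) hw
    have key1 : (pre h).app Q ≫ t ≫ (pre m).app Q = (pre m).app Q := by
      rw [← Category.assoc, ← hl2, Category.assoc, hum, ← Category.assoc, hl1,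
        Category.id_comp]
    have iso1 : (t ≫ (pre m).app Q) ≫ (pre e).app Q = 𝟙 _ := by
      apply (cancel_epi ((pre h).app Q)).1
      rw [← Category.assoc, key1, ← hcomp, Category.comp_id]
    have iso2 : (pre e).app Q ≫ t ≫ (pre m).app Q = 𝟙 _ := by
      apply (cancel_epi ((pre m).app Q)).1
      rw [← Category.assoc, ← hcomp, key1, Category.comp_id]
    haveI : IsIso ((pre e).app Q) := ⟨⟨t ≫ (pre m).app Q, iso2, iso1⟩⟩
    haveI : IsIso e.op := hcons e.op (by exact this)
    haveI : IsIso e := isIso_of_op e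
    haveI hmono : Mono h := by
      have : Mono (e ≫ m) := mono_comp e m
      rwa [he] at this
    refine ⟨⟨P, u, v, pushout.condition, ?_⟩⟩
    have h2 : inv e ≫ h = m := by rw [← he, IsIso.inv_hom_id_assoc]
    refine Fork.IsLimit.mk _
      (fun s => equalizer.lift s.ι s.condition ≫ inv e) (fun s => ?_) (fun s k hk => ?_)
    · rw [Fork.ι_ofι, Category.assoc, h2, equalizer.lift_ι]
    · apply (cancel_mono h).1
      rw [Fork.ι_ofι] at hk
      rw [hk, Category.assoc, h2, equalizer.lift_ι]
end

section
/- Let K be a commutative ring, A a K-algebra that is separable over K (i.e., A is projective as an (A,A)-bimodule, equivalently as a module over A ⊗_K A^op), and i : A → B a homomorphism of K-algebras. If i is a pure morphism of left A-modules (i.e., L ⊗_A i is injective for every right A-module L), then the induced map i⁺ : B⁺ → A⁺ on character bimodules M⁺ = Hom_ℤ(M, ℚ/ℤ) is a split epimorphism of (A,A)-bimodules. -/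
open scoped TensorProduct
open MulOpposite

/-- The subgroup of `L ⊗[ℤ] M` by which one quotients to obtain the tensor product
`L ⊗[A] M` of a right `A`-module `L` and a left `A`-module `M` over a
(not necessarily commutative) ring `A`. -/
noncomputable def NCrel (A : Type) [Ring A] (L M : Type) [AddCommGroup L]
    [AddCommGroup M] [Module Aᵐᵒᵖ L] [Module A M] : AddSubgroup (L ⊗[ℤ] M) :=
  AddSubgroup.closure
    {x | ∃ (l : L) (a : A) (m : M), x = (op a • l) ⊗ₜ[ℤ] m - l ⊗ₜ[ℤ] (a • m)}

/-- The tensor product `L ⊗[A] M` over a (not necessarily commutative) ring `A` of a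
right `A`-module `L` and a left `A`-module `M`, as an abelian group. -/
abbrev NCT (A : Type) [Ring A] (L M : Type) [AddCommGroup L] [AddCommGroup M]
    [Module Aᵐᵒᵖ L] [Module A M] : Type :=
  (L ⊗[ℤ] M) ⧸ NCrel A L M

/-- The elementary tensor `l ⊗ m` in `L ⊗[A] M`. -/
noncomputable def NCT.tmul (A : Type) [Ring A] {L M : Type} [AddCommGroup L]
    [AddCommGroup M] [Module Aᵐᵒᵖ L] [Module A M] (l : L) (m : M) : NCT A L M :=
  QuotientAddGroup.mk (l ⊗ₜ[ℤ] m)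

/-- The map `L ⊗[A] f : L ⊗[A] M → L ⊗[A] N` induced by a morphism `f : M → N` of left
`A`-modules. -/
noncomputable def NCT.mapRight (A : Type) [Ring A] (L : Type) [AddCommGroup L]
    [Module Aᵐᵒᵖ L] {M N : Type} [AddCommGroup M] [AddCommGroup N] [Module A M]
    [Module A N] (f : M →+ N) (hf : ∀ (a : A) (m : M), f (a • m) = a • f m) :
    NCT A L M →+ NCT A L N :=
  QuotientAddGroup.map _ _
    (TensorProduct.map LinearMap.id f.toIntLinearMap).toAddMonoidHom
    (by
      refine (AddSubgroup.closure_le _).mpr ?_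
      rintro x ⟨l, a, m, rfl⟩
      simp only [SetLike.mem_coe, AddSubgroup.mem_comap, map_sub,
        LinearMap.toAddMonoidHom_coe, TensorProduct.map_tmul, LinearMap.id_coe, id_eq,
        AddMonoidHom.coe_toIntLinearMap]
      exact AddSubgroup.subset_closure ⟨l, a, f m, by rw [hf]⟩)

/-- The map `f ⊗[A] M : L ⊗[A] M → L' ⊗[A] M` induced by a morphism `f : L → L'` of
right `A`-modules. -/
noncomputable def NCT.mapLeft (A : Type) [Ring A] {L L' : Type} [AddCommGroup L]
    [AddCommGroup L'] [Module Aᵐᵒᵖ L] [Module Aᵐᵒᵖ L'] (M : Type) [AddCommGroup M]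
    [Module A M] (f : L →+ L') (hf : ∀ (a : Aᵐᵒᵖ) (l : L), f (a • l) = a • f l) :
    NCT A L M →+ NCT A L' M :=
  QuotientAddGroup.map _ _
    (TensorProduct.map f.toIntLinearMap LinearMap.id).toAddMonoidHom
    (by
      refine (AddSubgroup.closure_le _).mpr ?_
      rintro x ⟨l, a, m, rfl⟩
      simp only [SetLike.mem_coe, AddSubgroup.mem_comap, map_sub,
        LinearMap.toAddMonoidHom_coe, TensorProduct.map_tmul, LinearMap.id_coe, id_eq,
        AddMonoidHom.coe_toIntLinearMap]
      exact AddSubgroup.subset_closure ⟨f l, a, m, by rw [hf]⟩)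

/-- `i : A → B` is a pure morphism of left `A`-modules: for every right `A`-module `L`,
the map `L ⊗[A] i : L ⊗[A] A → L ⊗[A] B` is injective.  Here `B` is a left `A`-module
via `i`. -/
noncomputable def RingHom.LeftPure {A B : Type} [Ring A] [Ring B] (i : A →+* B) :
    Prop :=
  ∀ (L : Type) (_ : AddCommGroup L) (_ : Module Aᵐᵒᵖ L),
    letI : Module A B := Module.compHom B i
    Function.Injective
      (NCT.mapRight A L (M := A) (N := B) i.toAddMonoidHom
        (fun a m => show i (a * m) = i a * i m from map_mul i a m))

/-- `i : A → B` is a pure morphism of right `A`-modules: for every left `A`-module `L`,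
the map `i ⊗[A] L : A ⊗[A] L → B ⊗[A] L` is injective.  Here `B` is a right `A`-module
via `i`. -/
noncomputable def RingHom.RightPure {A B : Type} [Ring A] [Ring B] (i : A →+* B) :
    Prop :=
  ∀ (L : Type) (_ : AddCommGroup L) (_ : Module A L),
    letI : Module Aᵐᵒᵖ B := Module.compHom B (RingHom.op i)
    Function.Injective
      (NCT.mapLeft A (L := A) (L' := B) L i.toAddMonoidHom
        (fun a l => show i (l * a.unop) = i l * i a.unop from map_mul i l a.unop))


/-- The rational circle group `ℚ/ℤ`. -/
abbrev QZ : Type := AddCircle (1 : ℚ)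

/-- The `(A,A)`-bimodule action `(a · f · a') (x) = f (a' * x * a)` on the character
bimodule `A⁺ = Hom_ℤ(A, ℚ/ℤ)` of a ring `A`. -/
def charAct {A : Type} [Ring A] (a a' : A) (f : A →+ QZ) : A →+ QZ :=
  AddMonoidHom.mk' (fun x => f (a' * x * a))
    (by intro x y; simp [mul_add, add_mul])


/-- A `K`-algebra `A` is separable if the multiplication map `A ⊗[K] A → A` admits an
`(A,A)`-bimodule section, equivalently if there is a separability idempotent
`e ∈ A ⊗[K] A` with `(mul) e = 1` and `(a ⊗ 1) * e = e * (1 ⊗ a)` for all `a`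
(equivalently, `A` is projective as an `(A,A)`-bimodule). -/
def IsSeparableAlgebra (K A : Type) [CommRing K] [Ring A] [Algebra K A] : Prop :=
  ∃ e : A ⊗[K] A, LinearMap.mul' K A e = 1 ∧
    ∀ a : A, (a ⊗ₜ[K] (1 : A)) * e = e * ((1 : A) ⊗ₜ[K] a)



noncomputable def dualMod (A : Type) [Ring A] : Module Aᵐᵒᵖ (A →+ QZ) where
  smul a f := f.comp (AddMonoidHom.mulLeft a.unop)
  one_smul f := by ext x; show f ((1:Aᵐᵒᵖ).unop * x) = f x; simp
  mul_smul a b f := by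
    ext x; show f ((a * b).unop * x) = f (b.unop * (a.unop * x))
    simp [mul_assoc]
  smul_zero a := by ext x; rfl
  smul_add a f g := by ext x; rfl
  add_smul a b f := by
    ext x; show f ((a + b).unop * x) = f (a.unop * x) + f (b.unop * x)
    rw [unop_add, add_mul, map_add]
  zero_smul f := by ext x; show f ((0:Aᵐᵒᵖ).unop * x) = 0; simp

section Helpers

variable {A : Type} [Ring A] {L : Type} [AddCommGroup L] [Module Aᵐᵒᵖ L]
  {M N : Type} [AddCommGroup M] [AddCommGroup N] [Module A M] [Module A N]

lemma NCT.tmul_add (l : L) (m m' : M) :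
    NCT.tmul A l (m + m') = NCT.tmul A l m + NCT.tmul A l m' := by
  show QuotientAddGroup.mk _ = QuotientAddGroup.mk _ + QuotientAddGroup.mk _
  rw [← QuotientAddGroup.mk_add, TensorProduct.tmul_add]

lemma NCT.add_tmul (l l' : L) (m : M) :
    NCT.tmul A (l + l') m = NCT.tmul A l m + NCT.tmul A l' m := by
  show QuotientAddGroup.mk _ = QuotientAddGroup.mk _ + QuotientAddGroup.mk _
  rw [← QuotientAddGroup.mk_add, TensorProduct.add_tmul]

lemma NCT.smul_move (l : L) (a : A) (m : M) :
    NCT.tmul A (op a • l) m = NCT.tmul A l (a • m) := by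
  refine (QuotientAddGroup.eq_iff_sub_mem ..).mpr ?_
  exact AddSubgroup.subset_closure ⟨l, a, m, rfl⟩

lemma NCT.mapRight_tmul (f : M →+ N) (hf : ∀ (a : A) (m : M), f (a • m) = a • f m)
    (l : L) (m : M) :
    NCT.mapRight A L f hf (NCT.tmul A l m) = NCT.tmul A l (f m) := by
  show QuotientAddGroup.map _ _ _ _ (QuotientAddGroup.mk _) = _
  erw [QuotientAddGroup.map_mk]
  rfl

/-- Lift a balanced pairing to the tensor product over `A`. -/
noncomputable def pairLift (p : L →+ M →+ QZ)
    (hp : ∀ (a : A) (l : L) (m : M), p (op a • l) m = p l (a • m)) :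
    NCT A L M →+ QZ :=
  QuotientAddGroup.lift _
    (TensorProduct.liftAddHom p (fun z l m => by
      simp [map_zsmul]))
    (by
      refine (AddSubgroup.closure_le _).mpr ?_
      rintro x ⟨l, a, m, rfl⟩
      simp only [SetLike.mem_coe, AddMonoidHom.mem_ker, map_sub]
      rw [TensorProduct.liftAddHom_tmul, TensorProduct.liftAddHom_tmul, hp, sub_self])

lemma pairLift_tmul (p : L →+ M →+ QZ)
    (hp : ∀ (a : A) (l : L) (m : M), p (op a • l) m = p l (a • m))
    (l : L) (m : M) : pairLift p hp (NCT.tmul A l m) = p l m := by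
  show QuotientAddGroup.lift _ _ _ (QuotientAddGroup.mk _) = _
  refine (QuotientAddGroup.lift_mk ..).trans ?_
  exact TensorProduct.liftAddHom_tmul ..

end Helpers


noncomputable def rmun {A : Type} [Ring A] (v : A) (f : A →+ QZ) : A →+ QZ :=
  f.comp (AddMonoidHom.mulRight v)

section Main

variable {K A B : Type} [CommRing K] [Ring A] [Algebra K A] [Ring B] [Algebra K B]
variable [instL : Module Aᵐᵒᵖ (A →+ QZ)] [instB : Module A B]
variable (i : A →ₐ[K] B) (Ψ : NCT A (A →+ QZ) B →+ QZ)

/-- The component `(u, v) ↦ (b ↦ Ψ ⟦(f ∘ ·v) ⊗ (b * i u)⟧)`. -/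
noncomputable def cfun (f : A →+ QZ) (u v : A) : B →+ QZ :=
  AddMonoidHom.mk' (fun b => Ψ (NCT.tmul A (rmun v f) (b * i u)))
    (fun b b' => by
      show Ψ (NCT.tmul A (rmun v f) ((b + b') * i u)) =
        Ψ (NCT.tmul A (rmun v f) (b * i u)) + Ψ (NCT.tmul A (rmun v f) (b' * i u))
      rw [add_mul, NCT.tmul_add, map_add])

variable (hL : ∀ (a : A) (f : A →+ QZ) (x : A), (op a • f) x = f (a * x))
variable (hB : ∀ (a : A) (b : B), a • b = i a * b)

include hL hB

/-- The `K`-linear map `A ⊗[K] A →ₗ[K] B⁺` attached to `f : A⁺`. -/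
noncomputable def Hmap (hL : ∀ (a : A) (f : A →+ QZ) (x : A), (op a • f) x = f (a * x))
    (hB : ∀ (a : A) (b : B), a • b = i a * b) (f : A →+ QZ) : (A ⊗[K] A) →ₗ[K] CharacterModule B :=
  TensorProduct.lift (LinearMap.mk₂ K (cfun i Ψ f)
    (fun u₁ u₂ v => by
      refine CharacterModule.ext _ fun b => ?_
      show Ψ (NCT.tmul A (rmun v f) (b * i (u₁ + u₂))) =
        Ψ (NCT.tmul A (rmun v f) (b * i u₁)) + Ψ (NCT.tmul A (rmun v f) (b * i u₂))
      rw [map_add, mul_add, NCT.tmul_add, map_add])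
    (fun k u v => by
      refine CharacterModule.ext _ fun b => ?_
      erw [CharacterModule.smul_apply]
      show Ψ (NCT.tmul A (rmun v f) (b * i (k • u))) =
        Ψ (NCT.tmul A (rmun v f) ((k • b) * i u))
      rw [map_smul, mul_smul_comm, smul_mul_assoc])
    (fun u v₁ v₂ => by
      refine CharacterModule.ext _ fun b => ?_
      show Ψ (NCT.tmul A (rmun (v₁ + v₂) f) (b * i u)) =
        Ψ (NCT.tmul A (rmun v₁ f) (b * i u)) + Ψ (NCT.tmul A (rmun v₂ f) (b * i u))
      have h1 : rmun (v₁ + v₂) f = rmun v₁ f + rmun v₂ f := by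
        refine AddMonoidHom.ext fun x => ?_
        show f (x * (v₁ + v₂)) = f (x * v₁) + f (x * v₂)
        rw [mul_add, map_add]
      rw [h1, NCT.add_tmul, map_add])
    (fun k u v => by
      refine CharacterModule.ext _ fun b => ?_
      erw [CharacterModule.smul_apply]
      show Ψ (NCT.tmul A (rmun (k • v) f) (b * i u)) =
        Ψ (NCT.tmul A (rmun v f) ((k • b) * i u))
      have h1 : rmun (k • v) f = op (algebraMap K A k) • rmun v f := by
        refine AddMonoidHom.ext fun x => ?_
        rw [hL]
        show f (x * (k • v)) = f (algebraMap K A k * x * v)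
        rw [Algebra.smul_def, ← mul_assoc, ← Algebra.commutes]
      rw [h1, NCT.smul_move, hB, AlgHom.commutes, ← Algebra.smul_def, ← smul_mul_assoc]))

lemma Hmap_tmul (f : A →+ QZ) (u v : A) :
    Hmap i Ψ hL hB f (u ⊗ₜ[K] v) = cfun i Ψ f u v := by
  simp [Hmap]
  rfl

lemma Hmap_section (hsec : ∀ (g : A →+ QZ) (m : A), Ψ (NCT.tmul A g (i m)) = g m)
    (f : A →+ QZ) (a : A) (t : A ⊗[K] A) :
    Hmap i Ψ hL hB f t (i a) = f (a * LinearMap.mul' K A t) := by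
  induction t using TensorProduct.induction_on with
  | zero => rw [map_zero, map_zero, mul_zero, map_zero]; rfl
  | tmul u v =>
    rw [Hmap_tmul]
    show Ψ (NCT.tmul A (rmun v f) (i a * i u)) = _
    rw [← map_mul, hsec, LinearMap.mul'_apply]
    show f ((a * u) * v) = f (a * (u * v))
    rw [mul_assoc]
  | add x y hx hy =>
    rw [map_add (Hmap i Ψ hL hB f), map_add (LinearMap.mul' K A), mul_add, map_add f,
      ← hx, ← hy]
    rfl

lemma Hmap_move (f : A →+ QZ) (a a' : A) (b : B) (t : A ⊗[K] A) :
    Hmap i Ψ hL hB (charAct a a' f) t b =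
      Hmap i Ψ hL hB f (t * ((1 : A) ⊗ₜ[K] a)) (i a' * b) := by
  induction t using TensorProduct.induction_on with
  | zero => rw [map_zero, zero_mul, map_zero]; rfl
  | tmul u v =>
    rw [Hmap_tmul, Algebra.TensorProduct.tmul_mul_tmul, mul_one, Hmap_tmul]
    show Ψ (NCT.tmul A (rmun v (charAct a a' f)) (b * i u)) =
      Ψ (NCT.tmul A (rmun (v * a) f) ((i a' * b) * i u))
    have h1 : rmun v (charAct a a' f) = op a' • rmun (v * a) f := by
      refine AddMonoidHom.ext fun x => ?_
      rw [hL]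
      show f (a' * (x * v) * a) = f ((a' * x) * (v * a))
      simp [mul_assoc]
    rw [h1, NCT.smul_move, hB, ← mul_assoc]
  | add x y hx hy =>
    rw [map_add, add_mul, map_add]
    exact congrArg₂ (· + ·) hx hy

lemma Hmap_right (f : A →+ QZ) (a a' : A) (b : B) (t : A ⊗[K] A) :
    Hmap i Ψ hL hB f t (i a' * b * i a) =
      Hmap i Ψ hL hB f ((a ⊗ₜ[K] (1 : A)) * t) (i a' * b) := by
  induction t using TensorProduct.induction_on with
  | zero => rw [map_zero, mul_zero, map_zero]; rfl
  | tmul u v =>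
    rw [Hmap_tmul, Algebra.TensorProduct.tmul_mul_tmul, one_mul, Hmap_tmul]
    show Ψ (NCT.tmul A (rmun v f) ((i a' * b * i a) * i u)) =
      Ψ (NCT.tmul A (rmun v f) ((i a' * b) * i (a * u)))
    rw [map_mul, ← mul_assoc]
  | add x y hx hy =>
    rw [map_add, mul_add, map_add]
    exact congrArg₂ (· + ·) hx hy

end Main

/-- Let `K` be a commutative ring, `A` a separable `K`-algebra, and
`i : A → B` a homomorphism of `K`-algebras.  If `i` is a pure morphism of left
`A`-modules, then the induced map `i⁺ : B⁺ → A⁺` on character bimodules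
(`M⁺ = Hom_ℤ(M, ℚ/ℤ)`) is a split epimorphism of `(A,A)`-bimodules: there is an
additive section `s : A⁺ → B⁺` of precomposition with `i` which is equivariant for the
`(A,A)`-bimodule actions. -/
theorem stmt8 {K A B : Type} [CommRing K] [Ring A] [Algebra K A] [Ring B] [Algebra K B]
    (hA : IsSeparableAlgebra K A) (i : A →ₐ[K] B)
    (hpure : i.toRingHom.LeftPure) :
    ∃ s : (A →+ QZ) →+ (B →+ QZ),
      (∀ f : A →+ QZ, (s f).comp i.toRingHom.toAddMonoidHom = f) ∧
      (∀ (f : A →+ QZ) (a a' : A) (b : B),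
        s (charAct a a' f) b = s f (i a' * b * i a)) := by
  obtain ⟨e, he1, he2⟩ := hA
  letI instL : Module Aᵐᵒᵖ (A →+ QZ) := dualMod A
  letI instB : Module A B := Module.compHom B i.toRingHom
  have hL : ∀ (a : A) (f : A →+ QZ) (x : A), (op a • f) x = f (a * x) := fun _ _ _ => rfl
  have hB : ∀ (a : A) (b : B), a • b = i a * b := fun _ _ => rfl
  have hpA : ∀ (a : A) (l : A →+ QZ) (m : A),
      (AddMonoidHom.id (A →+ QZ)) (op a • l) m = (AddMonoidHom.id (A →+ QZ)) l (a • m) :=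
    fun a l m => rfl
  have hmul : ∀ (a m : A), i.toRingHom.toAddMonoidHom (a • m) = a • i.toRingHom.toAddMonoidHom m :=
    fun a m => map_mul i.toRingHom a m
  obtain ⟨Ψ, hΨ⟩ := (Module.Baer.of_divisible QZ).extension_property_addMonoidHom
    (NCT.mapRight A (A →+ QZ) (M := A) (N := B) i.toRingHom.toAddMonoidHom
      (fun a m => show i.toRingHom (a * m) = i.toRingHom a * i.toRingHom m from
        map_mul i.toRingHom a m))
    (hpure (A →+ QZ) inferInstance instL)
    (pairLift (AddMonoidHom.id (A →+ QZ)) hpA)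
  have hsec : ∀ (g : A →+ QZ) (m : A), Ψ (NCT.tmul A g (i m)) = g m := by
    intro g m
    have h1 := NCT.mapRight_tmul (A := A) (L := A →+ QZ) (M := A) (N := B)
      i.toRingHom.toAddMonoidHom
      (fun a m => show i.toRingHom (a * m) = i.toRingHom a * i.toRingHom m from
        map_mul i.toRingHom a m) g m
    have h2 := DFunLike.congr_fun hΨ (NCT.tmul A g m)
    rw [AddMonoidHom.comp_apply, h1, pairLift_tmul] at h2
    exact h2
  refine ⟨AddMonoidHom.mk' (fun f => Hmap i Ψ hL hB f e) ?_, ?_, ?_⟩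
  · intro f g
    have key : ∀ t : A ⊗[K] A,
        Hmap i Ψ hL hB (f + g) t = Hmap i Ψ hL hB f t + Hmap i Ψ hL hB g t := by
      intro t
      induction t using TensorProduct.induction_on with
      | zero => simp
      | tmul u v =>
        rw [Hmap_tmul, Hmap_tmul, Hmap_tmul]
        refine CharacterModule.ext _ fun b => ?_
        show Ψ (NCT.tmul A (rmun v (f + g)) (b * i u)) =
          Ψ (NCT.tmul A (rmun v f) (b * i u)) + Ψ (NCT.tmul A (rmun v g) (b * i u))
        have h1 : rmun v (f + g) = rmun v f + rmun v g := rfl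
        rw [h1, NCT.add_tmul, map_add]
      | add x y hx hy => rw [map_add, map_add, map_add, hx, hy]; abel
    exact key e
  · intro f
    refine AddMonoidHom.ext fun a => ?_
    show Hmap i Ψ hL hB f e (i a) = f a
    rw [Hmap_section i Ψ hL hB hsec, he1, mul_one]
  · intro f a a' b
    show Hmap i Ψ hL hB (charAct a a' f) e b = Hmap i Ψ hL hB f e (i a' * b * i a)
    rw [Hmap_move i Ψ hL hB f a a' b e, ← he2 a, ← Hmap_right i Ψ hL hB f a a' b e]
end

section
/- Let K be a commutative ring, A a K-algebra, M a right A-module finitely generated and projective, E = End_A(M), and i_M : K → E the canonical map k ↦ (m ↦ km). Then i_M is a pure morphism of K-modules (i.e., X ⊗_K i_M is injective for all K-modules X) if and only if M is totally faithful over K (i.e., X → Hom_A(M, X ⊗_K M) is injective for all K-modules X). -/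
open scoped TensorProduct

section Aux

variable {K : Type} (A : Type) [CommRing K] [Ring A] [Algebra K A]
    (M : Type) [AddCommGroup M] [Module K M] [Module Aᵐᵒᵖ M]
    [SMulCommClass K Aᵐᵒᵖ M] [SMulCommClass Aᵐᵒᵖ K M]

/-- Evaluation at `m` as a `K`-linear map on `End_{Aᵒᵖ}(M)`. -/
def evAt (m : M) : Module.End Aᵐᵒᵖ M →ₗ[K] M where
  toFun φ := φ m
  map_add' φ ψ := rfl
  map_smul' k φ := rfl

/-- Key injectivity: if a tensor `t : X ⊗ End(M)` evaluates to zero at every `m`, it is zero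
(uses that `M` is finitely generated projective over `Aᵒᵖ`). -/
theorem key [Module.Finite Aᵐᵒᵖ M] [Module.Projective Aᵐᵒᵖ M]
    (X : Type) [AddCommGroup X] [Module K X]
    (t : X ⊗[K] Module.End Aᵐᵒᵖ M)
    (h : ∀ m : M, LinearMap.lTensor X (evAt A M m) t = 0) : t = 0 := by
  obtain ⟨n, π, s, hπ, hs, hcomp⟩ :=
    Module.Finite.exists_comp_eq_id_of_projective Aᵐᵒᵖ M
  -- dual basis data
  set mi : Fin n → M := fun i => π (Pi.single i 1) with hmi
  have hdual : ∀ m : M, (∑ i, (s m i) • mi i) = m := by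
    intro m
    have hπs : π (s m) = m := by
      have := LinearMap.congr_fun hcomp m
      simpa using this
    have hsm : s m = ∑ i, (s m i) • Pi.single i (1 : Aᵐᵒᵖ) := by
      funext j
      simp [Finset.sum_apply, Pi.single_apply, smul_eq_mul]
    have hps : π (s m) = ∑ i, (s m i) • mi i := by
      conv_lhs => rw [hsm]
      simp [mi, map_sum, map_smul]
    rw [← hps, hπs]
  -- the maps hᵢ : M →ₗ[K] End(M)
  set hmap : Fin n → (M →ₗ[K] Module.End Aᵐᵒᵖ M) := fun i =>
    { toFun := fun m' =>
        (LinearMap.toSpanSingleton Aᵐᵒᵖ M m').comp ((LinearMap.proj i).comp s)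
      map_add' := by
        intro m' m''
        ext m
        simp [LinearMap.toSpanSingleton_apply, smul_add]
      map_smul' := by
        intro k m'
        ext m
        simp only [LinearMap.coe_comp, Function.comp_apply, LinearMap.smul_apply,
          LinearMap.toSpanSingleton_apply, RingHom.id_apply, LinearMap.proj_apply]
        rw [smul_comm] } with hhmap
  -- the identity `∑ i, hᵢ ∘ (evAt mᵢ) = id` on `End(M)`
  have hid : (∑ i, (hmap i).comp (evAt A M (mi i)))
      = (LinearMap.id : Module.End Aᵐᵒᵖ M →ₗ[K] Module.End Aᵐᵒᵖ M) := by
    ext φ m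
    have h1 : (∑ i, (hmap i).comp (evAt A M (mi i))) φ
        = ∑ i, (hmap i) (φ (mi i)) := by
      simp [LinearMap.sum_apply, evAt]
    rw [h1]
    have h2 : (∑ i, (hmap i) (φ (mi i))) m = ∑ i, (s m i) • φ (mi i) := by
      simp [hhmap, LinearMap.toSpanSingleton_apply]
    rw [LinearMap.id_coe, id_eq, h2]
    calc ∑ i, (s m i) • φ (mi i) = ∑ i, φ ((s m i) • mi i) := by
          simp [map_smul]
      _ = φ (∑ i, (s m i) • mi i) := by rw [map_sum]
      _ = φ m := by rw [hdual m]
  -- conclude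
  have hrw : t = LinearMap.lTensor X (∑ i, (hmap i).comp (evAt A M (mi i))) t := by
    rw [hid, LinearMap.lTensor_id, LinearMap.id_apply]
  have hsum : LinearMap.lTensor X (∑ i, (hmap i).comp (evAt A M (mi i)))
      = ∑ i, LinearMap.lTensor X ((hmap i).comp (evAt A M (mi i))) := by
    have := map_sum (LinearMap.lTensorHom X :
        (Module.End Aᵐᵒᵖ M →ₗ[K] Module.End Aᵐᵒᵖ M) →ₗ[K]
          (X ⊗[K] Module.End Aᵐᵒᵖ M →ₗ[K] X ⊗[K] Module.End Aᵐᵒᵖ M))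
      (fun i => (hmap i).comp (evAt A M (mi i))) Finset.univ
    exact this
  rw [hrw, hsum, LinearMap.sum_apply]
  refine Finset.sum_eq_zero fun i _ => ?_
  rw [LinearMap.lTensor_comp, LinearMap.comp_apply, h (mi i), map_zero]

end Aux

/-- Let `K` be a commutative ring, `A` a `K`-algebra, `M` a right
`A`-module that is finitely generated and projective, `E = End_A(M)`, and
`i_M : K → E` the canonical map `k ↦ (m ↦ k • m)`.  Then `i_M` is a pure morphism of
`K`-modules (i.e. `X ⊗[K] i_M` is injective for every `K`-module `X`) if and only if
`M` is totally faithful over `K` (i.e. `X → Hom_A(M, X ⊗[K] M)`, `x ↦ (m ↦ x ⊗ m)`, is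
injective for every `K`-module `X`).  (Right `A`-modules are encoded as modules over
the opposite ring.) -/
theorem stmt18 {K A : Type} [CommRing K] [Ring A] [Algebra K A]
    (M : Type) [AddCommGroup M] [Module K M] [Module Aᵐᵒᵖ M]
    [SMulCommClass K Aᵐᵒᵖ M] [SMulCommClass Aᵐᵒᵖ K M]
    [Module.Finite Aᵐᵒᵖ M] [Module.Projective Aᵐᵒᵖ M] :
    (∀ (X : Type) (_ : AddCommGroup X) (_ : Module K X),
      Function.Injective
        (LinearMap.lTensor X
          (LinearMap.toSpanSingleton K (Module.End Aᵐᵒᵖ M) LinearMap.id))) ↔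
    (∀ (X : Type) (_ : AddCommGroup X) (_ : Module K X),
      Function.Injective (fun x : X => (fun m : M => (x ⊗ₜ[K] m : X ⊗[K] M)))) := by
  constructor
  · -- purity → totally faithful
    intro hpure X _ _
    intro x y hxy
    have hz : ∀ m : M, (x - y) ⊗ₜ[K] m = (0 : X ⊗[K] M) := by
      intro m
      have := congr_fun hxy m
      simp only at this
      rw [TensorProduct.sub_tmul, this, sub_self]
    have hx : x - y = 0 := by
      set t := LinearMap.lTensor X
        (LinearMap.toSpanSingleton K (Module.End Aᵐᵒᵖ M) LinearMap.id)
        ((x - y) ⊗ₜ[K] (1 : K)) with ht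
      have htval : t = (x - y) ⊗ₜ[K] (LinearMap.id : Module.End Aᵐᵒᵖ M) := by
        simp [ht, LinearMap.lTensor_tmul, LinearMap.toSpanSingleton_apply]
      have hev : ∀ m : M, LinearMap.lTensor X (evAt A M m) t = 0 := by
        intro m
        rw [htval, LinearMap.lTensor_tmul]
        show (x - y) ⊗ₜ[K] ((LinearMap.id : Module.End Aᵐᵒᵖ M) m) = 0
        simpa using hz m
      have ht0 : t = 0 := key A M X t hev
      have h1 : ((x - y) ⊗ₜ[K] (1 : K) : X ⊗[K] K) = 0 := by
        apply hpure X _ _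
        rw [map_zero]
        exact ht0
      have := congrArg (TensorProduct.rid K X) h1
      simpa using this
    exact sub_eq_zero.mp hx
  · -- totally faithful → purity
    intro htf X iX mX
    intro t u htu
    have hsub : LinearMap.lTensor X
        (LinearMap.toSpanSingleton K (Module.End Aᵐᵒᵖ M) LinearMap.id) (t - u) = 0 := by
      rw [map_sub, htu, sub_self]
    set x : X := TensorProduct.rid K X (t - u) with hx
    have htu' : t - u = x ⊗ₜ[K] (1 : K) := by
      rw [hx, ← TensorProduct.rid_symm_apply]
      exact ((TensorProduct.rid K X).symm_apply_apply (t - u)).symm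
    have hxm : ∀ m : M, (x ⊗ₜ[K] m : X ⊗[K] M) = 0 := by
      intro m
      have h1 : LinearMap.lTensor X
          (LinearMap.toSpanSingleton K (Module.End Aᵐᵒᵖ M) LinearMap.id)
          (x ⊗ₜ[K] (1 : K)) = 0 := by
        rw [← htu']; exact hsub
      have h2 : (x ⊗ₜ[K] (LinearMap.id : Module.End Aᵐᵒᵖ M) : X ⊗[K] Module.End Aᵐᵒᵖ M)
          = 0 := by
        simpa [LinearMap.lTensor_tmul, LinearMap.toSpanSingleton_apply] using h1
      have := congrArg (LinearMap.lTensor X (evAt A M m)) h2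
      simpa [LinearMap.lTensor_tmul, evAt] using this
    have hx0 : x = 0 := by
      have := htf X iX mX (a₁ := x) (a₂ := 0) (by
        funext m
        simp [hxm m])
      exact this
    have : t - u = 0 := by rw [htu', hx0, TensorProduct.zero_tmul]
    exact sub_eq_zero.mp this
end

section
/- Let i : A → B be a ring homomorphism such that i⁺ : B⁺ → A⁺ splits as (A,A)-bimodules, where M⁺ = Hom_ℤ(M, ℚ/ℤ). Then i : A → B is a pure morphism both of left A-modules and of right A-modules. -/
open scoped TensorProduct
open MulOpposite

lemma char_inj {X Y : Type} [AddCommGroup X] [AddCommGroup Y] (φ : X →+ Y)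
    (h : ∀ χ : X →+ QZ, ∃ ψ : Y →+ QZ, ψ.comp φ = χ) : Function.Injective φ := by
  rw [injective_iff_map_eq_zero]
  intro x hx
  by_contra hx0
  obtain ⟨χ, hχ⟩ := CharacterModule.exists_character_apply_ne_zero_of_ne_zero hx0
  obtain ⟨ψ, hψ⟩ := h χ
  apply hχ
  calc χ x = ψ (φ x) := (DFunLike.congr_fun hψ x).symm
    _ = 0 := by rw [hx, map_zero]

/-- Let `i : A → B` be a ring homomorphism such that
`i⁺ : B⁺ → A⁺` splits as `(A,A)`-bimodules, where `M⁺ = Hom_ℤ(M, ℚ/ℤ)`; i.e. there is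
an additive section `s : A⁺ → B⁺` of precomposition with `i` which is equivariant for
the `(A,A)`-bimodule actions.  Then `i` is a pure morphism both of left `A`-modules and
of right `A`-modules. -/
theorem stmt19 {A B : Type} [Ring A] [Ring B] (i : A →+* B)
    (s : (A →+ QZ) →+ (B →+ QZ))
    (hsec : ∀ f : A →+ QZ, (s f).comp i.toAddMonoidHom = f)
    (hequiv : ∀ (f : A →+ QZ) (a a' : A) (b : B),
      s (charAct a a' f) b = s f (i a' * b * i a)) :
    i.LeftPure ∧ i.RightPure := by
  constructor
  · -- Left purity
    intro L _ _
    letI : Module A B := Module.compHom B i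
    apply char_inj
    intro χ
    let χ0 : (L ⊗[ℤ] A) →+ QZ := χ.comp (QuotientAddGroup.mk' (NCrel A L A))
    have hχ0 : ∀ z ∈ NCrel A L A, χ0 z = 0 := by
      intro z hz
      show χ _ = 0
      rw [QuotientAddGroup.mk'_apply, (QuotientAddGroup.eq_zero_iff z).mpr hz, map_zero]
    let f : L → (A →+ QZ) := fun l => χ0.comp (TensorProduct.mk ℤ L A l).toAddMonoidHom
    have hf : ∀ l x, f l x = χ0 (l ⊗ₜ[ℤ] x) := fun _ _ => rfl
    have fadd : ∀ l l' : L, f (l + l') = f l + f l' := by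
      intro l l'
      ext x
      simp only [hf, AddMonoidHom.add_apply, ← map_add, TensorProduct.add_tmul]
    let G : L →+ (B →+ QZ) := AddMonoidHom.mk' (fun l => s (f l)) (by
      intro l l'; show s (f (l + l')) = s (f l) + s (f l'); rw [fadd, map_add])
    let Flin : L →ₗ[ℤ] B →ₗ[ℤ] QZ :=
      { toFun := fun l => (G l).toIntLinearMap
        map_add' := fun l l' => by ext b; simp
        map_smul' := fun n l => by ext b; simp }
    let ψ0 : (L ⊗[ℤ] B) →+ QZ := (TensorProduct.lift Flin).toAddMonoidHom
    have hψ0 : ∀ l b, ψ0 (l ⊗ₜ[ℤ] b) = s (f l) b := fun _ _ => rfl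
    have hker : ∀ y ∈ NCrel A L B, ψ0 y = 0 := by
      intro y hy
      rw [← AddMonoidHom.mem_ker]
      revert y hy
      rw [← SetLike.le_def, NCrel, AddSubgroup.closure_le]
      rintro y ⟨l, a, b, rfl⟩
      have hfl : f (op a • l) = charAct 1 a (f l) := by
        ext x
        show χ0 ((op a • l) ⊗ₜ[ℤ] x) = χ0 (l ⊗ₜ[ℤ] (a * x * 1))
        rw [mul_one, ← sub_eq_zero, ← map_sub]
        exact hχ0 _ (AddSubgroup.subset_closure ⟨l, a, x, rfl⟩)
      simp only [SetLike.mem_coe, AddMonoidHom.mem_ker, map_sub, hψ0, hfl, sub_eq_zero]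
      rw [hequiv]
      show s (f l) (i a * b * i 1) = s (f l) (i a * b)
      rw [map_one, mul_one]
    refine ⟨QuotientAddGroup.lift (NCrel A L B) ψ0 hker, ?_⟩
    refine DFunLike.ext _ _ fun z => ?_
    induction z using QuotientAddGroup.induction_on with
    | H t =>
      induction t using TensorProduct.induction_on with
      | zero => simp
      | tmul l a =>
        show ψ0 (l ⊗ₜ[ℤ] (i a)) = χ0 (l ⊗ₜ[ℤ] a)
        rw [hψ0, ← hf]
        exact DFunLike.congr_fun (hsec (f l)) a
      | add t t' ht ht' =>
        have h : (QuotientAddGroup.mk (t + t') : NCT A L A)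
            = QuotientAddGroup.mk t + QuotientAddGroup.mk t' := rfl
        rw [h, map_add, map_add, ht, ht']
  · -- Right purity
    intro L _ _
    letI : Module Aᵐᵒᵖ B := Module.compHom B (RingHom.op i)
    apply char_inj
    intro χ
    let χ0 : (A ⊗[ℤ] L) →+ QZ := χ.comp (QuotientAddGroup.mk' (NCrel A A L))
    have hχ0 : ∀ z ∈ NCrel A A L, χ0 z = 0 := by
      intro z hz
      show χ _ = 0
      rw [QuotientAddGroup.mk'_apply, (QuotientAddGroup.eq_zero_iff z).mpr hz, map_zero]
    let g : L → (A →+ QZ) := fun l =>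
      χ0.comp ((TensorProduct.mk ℤ A L).flip l).toAddMonoidHom
    have hg : ∀ l x, g l x = χ0 (x ⊗ₜ[ℤ] l) := fun _ _ => rfl
    have gadd : ∀ l l' : L, g (l + l') = g l + g l' := by
      intro l l'
      ext x
      simp only [hg, AddMonoidHom.add_apply, ← map_add, TensorProduct.tmul_add]
    let G : L →+ (B →+ QZ) := AddMonoidHom.mk' (fun l => s (g l)) (by
      intro l l'; show s (g (l + l')) = s (g l) + s (g l'); rw [gadd, map_add])
    let Flin : L →ₗ[ℤ] B →ₗ[ℤ] QZ :=
      { toFun := fun l => (G l).toIntLinearMap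
        map_add' := fun l l' => by ext b; simp
        map_smul' := fun n l => by ext b; simp }
    let ψ0 : (B ⊗[ℤ] L) →+ QZ := (TensorProduct.lift Flin.flip).toAddMonoidHom
    have hψ0 : ∀ b l, ψ0 (b ⊗ₜ[ℤ] l) = s (g l) b := fun _ _ => rfl
    have hker : ∀ y ∈ NCrel A B L, ψ0 y = 0 := by
      intro y hy
      rw [← AddMonoidHom.mem_ker]
      revert y hy
      rw [← SetLike.le_def, NCrel, AddSubgroup.closure_le]
      rintro y ⟨b, a, l, rfl⟩
      have hgl : g (a • l) = charAct a 1 (g l) := by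
        ext x
        show χ0 (x ⊗ₜ[ℤ] (a • l)) = χ0 ((1 * x * a) ⊗ₜ[ℤ] l)
        rw [one_mul, eq_comm, ← sub_eq_zero, ← map_sub]
        exact hχ0 _ (AddSubgroup.subset_closure ⟨x, a, l, rfl⟩)
      simp only [SetLike.mem_coe, AddMonoidHom.mem_ker, map_sub, hψ0, hgl, sub_eq_zero]
      rw [hequiv]
      show s (g l) (b * i a) = s (g l) (i 1 * b * i a)
      rw [map_one, one_mul]
    refine ⟨QuotientAddGroup.lift (NCrel A B L) ψ0 hker, ?_⟩
    refine DFunLike.ext _ _ fun z => ?_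
    induction z using QuotientAddGroup.induction_on with
    | H t =>
      induction t using TensorProduct.induction_on with
      | zero => simp
      | tmul a l =>
        show ψ0 ((i a) ⊗ₜ[ℤ] l) = χ0 (a ⊗ₜ[ℤ] l)
        rw [hψ0, ← hg]
        exact DFunLike.congr_fun (hsec (g l)) a
      | add t t' ht ht' =>
        have h : (QuotientAddGroup.mk (t + t') : NCT A A L)
            = QuotientAddGroup.mk t + QuotientAddGroup.mk t' := rfl
        rw [h, map_add, map_add, ht, ht']
end
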